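/- Fix integers d ≥ 3 and ℓ ≥ 1 and let z ∈ ℂ with Im z > 0. Let P be the inverse of H_{𝒴_ℓ} − z·I − m_sc(z)·𝕀∂, where 𝒴_ℓ is the ball of radius ℓ in the infinite (d−1)-ary tree with root o. Then (P·𝕀∂·P)_{oo} = m_sc(z)^{2ℓ+2}. -/

import Mathlib

open scoped Classical

noncomputable section

/-- Vertices of the ball of radius `ℓ` in the infinite `m`-ary rooted tree:
words over `Fin m` of length at most `ℓ`. -/
def TreeBallY (m ℓ : ℕ) : Type := {l : List (Fin m) // l.length ≤ ℓ}

instance (m ℓ : ℕ) : DecidableEq (TreeBallY m ℓ) :=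
  inferInstanceAs (DecidableEq {l : List (Fin m) // l.length ≤ ℓ})

instance (m ℓ : ℕ) : Fintype (TreeBallY m ℓ) :=
  Fintype.ofSurjective
    (fun p : (Σ k : Fin (ℓ + 1), List.Vector (Fin m) k) =>
      (⟨p.2.toList, by
        have h1 : p.2.toList.length = (p.1 : ℕ) := p.2.toList_length
        have h2 := p.1.isLt
        omega⟩ : TreeBallY m ℓ))
    (fun l => ⟨⟨⟨l.1.length, Nat.lt_succ_of_le l.2⟩, ⟨l.1, rfl⟩⟩, rfl⟩)

/-- The tree structure on the ball of radius `ℓ` of the `m`-ary rooted tree: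
`x` is adjacent to `y` iff one of them is obtained from the other by appending one letter
(i.e. one is the parent of the other). -/
def treeGraphY (m ℓ : ℕ) : SimpleGraph (TreeBallY m ℓ) :=
  SimpleGraph.fromRel (fun x y => ∃ a : Fin m, y.1 = x.1 ++ [a])

/-- The root of the tree: the empty word. -/
def rootY (m ℓ : ℕ) : TreeBallY m ℓ := ⟨[], Nat.zero_le _⟩

/-- The normalized adjacency matrix `A/√(d-1)` of the ball `𝒴_ℓ` of radius `ℓ` in the
infinite `(d-1)`-ary tree. -/
def HmatY (d ℓ : ℕ) : Matrix (TreeBallY (d - 1) ℓ) (TreeBallY (d - 1) ℓ) ℂ :=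
  fun x y => if (treeGraphY (d - 1) ℓ).Adj x y then (Real.sqrt ((d : ℝ) - 1) : ℂ)⁻¹ else 0

/-- The leaf indicator `𝕀∂` of `𝒴_ℓ`: the diagonal 0-1 matrix whose entry at `x` is `1`
exactly when `dist(x, o) = ℓ`. -/
def IbdY (d ℓ : ℕ) : Matrix (TreeBallY (d - 1) ℓ) (TreeBallY (d - 1) ℓ) ℂ :=
  Matrix.diagonal (fun x => if (treeGraphY (d - 1) ℓ).dist (rootY (d - 1) ℓ) x = ℓ then 1 else 0)

/-- Vertices of the ball `𝒳_ℓ` of radius `ℓ` in the infinite `d`-regular tree: the root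
(`none`), or a first step in `Fin d` followed by a word over `Fin (d-1)` of length at most
`ℓ - 1`. -/
def TreeBallX (d ℓ : ℕ) : Type := Option (Fin d × TreeBallY (d - 1) (ℓ - 1))

instance (d ℓ : ℕ) : DecidableEq (TreeBallX d ℓ) :=
  inferInstanceAs (DecidableEq (Option (Fin d × TreeBallY (d - 1) (ℓ - 1))))

instance (d ℓ : ℕ) : Fintype (TreeBallX d ℓ) :=
  inferInstanceAs (Fintype (Option (Fin d × TreeBallY (d - 1) (ℓ - 1))))

/-- The tree structure on the ball `𝒳_ℓ` of radius `ℓ` of the `d`-regular tree: the root is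
adjacent to the `d` one-step vertices, and within each branch two vertices are adjacent iff one
is the parent of the other. -/
def treeGraphX (d ℓ : ℕ) : SimpleGraph (TreeBallX d ℓ) :=
  SimpleGraph.fromRel (fun x y =>
    (∃ a : Fin d, x = none ∧ y = some (a, ⟨[], Nat.zero_le _⟩)) ∨
    (∃ (a : Fin d) (s t : TreeBallY (d - 1) (ℓ - 1)),
      x = some (a, s) ∧ y = some (a, t) ∧ ∃ b : Fin (d - 1), t.1 = s.1 ++ [b]))

/-- The root of the `d`-regular tree ball `𝒳_ℓ`. -/
def rootX (d ℓ : ℕ) : TreeBallX d ℓ := none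

/-- The normalized adjacency matrix `A/√(d-1)` of the ball `𝒳_ℓ` of radius `ℓ` in the
infinite `d`-regular tree. -/
def HmatX (d ℓ : ℕ) : Matrix (TreeBallX d ℓ) (TreeBallX d ℓ) ℂ :=
  fun x y => if (treeGraphX d ℓ).Adj x y then (Real.sqrt ((d : ℝ) - 1) : ℂ)⁻¹ else 0

/-- The leaf indicator `𝕀∂` of `𝒳_ℓ`. -/
def IbdX (d ℓ : ℕ) : Matrix (TreeBallX d ℓ) (TreeBallX d ℓ) ℂ :=
  Matrix.diagonal (fun x => if (treeGraphX d ℓ).dist (rootX d ℓ) x = ℓ then 1 else 0)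

/-- Longest common prefix of two words. -/
def lcp {m : ℕ} : List (Fin m) → List (Fin m) → List (Fin m)
  | [], _ => []
  | _ :: _, [] => []
  | a :: s, b :: t => if a = b then a :: lcp s t else []

theorem lcp_length_le_left {m : ℕ} : ∀ s t : List (Fin m), (lcp s t).length ≤ s.length
  | [], _ => by simp [lcp]
  | _ :: _, [] => by simp [lcp]
  | a :: s, b :: t => by
    by_cases h : a = b
    · simp only [lcp, if_pos h, List.length_cons]
      exact Nat.succ_le_succ (lcp_length_le_left s t)
    · simp [lcp, h]

/-- The least common ancestor of two vertices of `𝒴_ℓ`: their longest common prefix. -/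
def lcaY {m ℓ : ℕ} (x y : TreeBallY m ℓ) : TreeBallY m ℓ :=
  ⟨lcp x.1 y.1, le_trans (lcp_length_le_left _ _) x.2⟩

/-- `anc(x,y)`: the distance from the least common ancestor of `x` and `y` to the root `o`. -/
def ancY {m ℓ : ℕ} (x y : TreeBallY m ℓ) : ℕ :=
  (treeGraphY m ℓ).dist (rootY m ℓ) (lcaY x y)

end

namespace PIbdPAux

open Finset Matrix
open scoped Matrix

lemma adj_iff {m ℓ : ℕ} (x y : TreeBallY m ℓ) :
    (treeGraphY m ℓ).Adj x y ↔
      (∃ a : Fin m, y.1 = x.1 ++ [a]) ∨ (∃ a : Fin m, x.1 = y.1 ++ [a]) := by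
  rw [treeGraphY, SimpleGraph.fromRel_adj]
  constructor
  · rintro ⟨-, h⟩; exact h
  · intro h
    refine ⟨?_, h⟩
    rintro rfl
    rcases h with ⟨a, ha⟩ | ⟨a, ha⟩ <;>
      · have := congrArg List.length ha
        simp at this

lemma parent_iff {m ℓ : ℕ} (x y : TreeBallY m ℓ) :
    (∃ a : Fin m, y.1 = x.1 ++ [a]) ↔ (y.1 ≠ [] ∧ x.1 = y.1.dropLast) := by
  constructor
  · rintro ⟨a, ha⟩
    constructor
    · rw [ha]; simp
    · rw [ha, List.dropLast_concat]
  · rintro ⟨hne, hdrop⟩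
    refine ⟨y.1.getLast hne, ?_⟩
    rw [hdrop]
    exact (List.dropLast_append_getLast hne).symm

lemma exists_walk {m ℓ : ℕ} (l : List (Fin m)) (hl : l.length ≤ ℓ) :
    ∃ w : (treeGraphY m ℓ).Walk (rootY m ℓ) ⟨l, hl⟩, w.length = l.length := by
  induction l using List.reverseRecOn with
  | nil =>
    refine ⟨(SimpleGraph.Walk.nil' _).copy rfl (Subtype.ext rfl), ?_⟩
    exact (SimpleGraph.Walk.length_copy _ _ _).trans rfl
  | append_singleton s a ih =>
    have hs : s.length ≤ ℓ := by
      have := hl; simp at this; omega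
    obtain ⟨w, hw⟩ := ih hs
    have hadj : (treeGraphY m ℓ).Adj ⟨s, hs⟩ ⟨s ++ [a], hl⟩ := by
      exact (adj_iff _ _).2 (Or.inl ⟨a, rfl⟩)
    refine ⟨w.concat hadj, ?_⟩
    exact (SimpleGraph.Walk.length_concat w hadj).trans
      (by simp only [List.length_append, List.length_singleton]; omega)

lemma length_le_of_walk {m ℓ : ℕ} {x y : TreeBallY m ℓ}
    (w : (treeGraphY m ℓ).Walk x y) : y.1.length ≤ x.1.length + w.length := by
  induction w with
  | nil => simp
  | @cons u b v h p ih =>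
    have hb : b.1.length ≤ u.1.length + 1 := by
      rw [adj_iff] at h
      rcases h with ⟨a, ha⟩ | ⟨a, ha⟩ <;>
        · have := congrArg List.length ha
          simp at this
          omega
    rw [SimpleGraph.Walk.length_cons]
    omega

lemma dist_root {m ℓ : ℕ} (x : TreeBallY m ℓ) :
    (treeGraphY m ℓ).dist (rootY m ℓ) x = x.1.length := by
  obtain ⟨w, hw⟩ := exists_walk x.1 x.2
  refine le_antisymm (hw ▸ SimpleGraph.dist_le w) ?_
  have hr : (treeGraphY m ℓ).Reachable (rootY m ℓ) x := ⟨w⟩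
  obtain ⟨w', hw'⟩ := hr.exists_walk_length_eq_dist
  have := length_le_of_walk w'
  rw [← hw']
  simpa [rootY] using this

lemma sum_children {m ℓ : ℕ} (y : TreeBallY m ℓ) (f : TreeBallY m ℓ → ℂ) :
    ∑ x : TreeBallY m ℓ, (if ∃ a : Fin m, x.1 = y.1 ++ [a] then f x else 0)
      = if h : y.1.length < ℓ then
          ∑ a : Fin m, f ⟨y.1 ++ [a], by simpa using h⟩ else 0 := by
  by_cases h : y.1.length < ℓ
  · rw [dif_pos h]
    have step : ∀ x : TreeBallY m ℓ,
        (if ∃ a : Fin m, x.1 = y.1 ++ [a] then f x else 0)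
          = ∑ a : Fin m, (if x = ⟨y.1 ++ [a], by simpa using h⟩ then f x else 0) := by
      intro x
      by_cases hex : ∃ a : Fin m, x.1 = y.1 ++ [a]
      · obtain ⟨a₀, ha₀⟩ := hex
        rw [if_pos ⟨a₀, ha₀⟩, Finset.sum_eq_single a₀]
        · exact (if_pos (show x = ⟨y.1 ++ [a₀], by simpa using h⟩ from Subtype.ext ha₀)).symm
        · intro b _ hb
          rw [if_neg]
          intro hxb
          apply hb
          have : y.1 ++ [a₀] = y.1 ++ [b] := by
            rw [← ha₀, congrArg Subtype.val hxb]
          have h2 : a₀ = b := by simpa using this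
          exact h2.symm
        · intro h'; exact absurd (Finset.mem_univ a₀) h'
      · rw [if_neg hex]
        refine (Finset.sum_eq_zero ?_).symm
        intro b _
        rw [if_neg]
        intro hxb
        exact hex ⟨b, congrArg Subtype.val hxb⟩
    rw [Finset.sum_congr rfl (fun x _ => step x), Finset.sum_comm]
    refine Finset.sum_congr rfl ?_
    intro a _
    letI : DecidableEq (TreeBallY m ℓ) := fun _ _ => Classical.propDecidable _
    exact (Finset.sum_ite_eq' Finset.univ ⟨y.1 ++ [a], by simpa using h⟩ f).trans (if_pos (Finset.mem_univ _))
  · rw [dif_neg h]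
    refine Finset.sum_eq_zero ?_
    intro x _
    rw [if_neg]
    rintro ⟨a, ha⟩
    have hx := x.2
    have := congrArg List.length ha
    simp at this
    omega

lemma sum_parent {m ℓ : ℕ} (y : TreeBallY m ℓ) (f : TreeBallY m ℓ → ℂ) :
    ∑ x : TreeBallY m ℓ, (if (y.1 ≠ [] ∧ x.1 = y.1.dropLast) then f x else 0)
      = if y.1 ≠ [] then
          f ⟨y.1.dropLast, by rw [List.length_dropLast]; exact le_trans (Nat.sub_le _ _) y.2⟩
        else 0 := by
  by_cases hy : y.1 = []
  · simp [hy]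
  · rw [if_pos hy]
    set p : TreeBallY m ℓ :=
      ⟨y.1.dropLast, by rw [List.length_dropLast]; exact le_trans (Nat.sub_le _ _) y.2⟩ with hp
    rw [Finset.sum_eq_single p]
    · rw [if_pos ⟨hy, rfl⟩]
    · intro b _ hb
      rw [if_neg]
      rintro ⟨-, hbp⟩
      exact hb (Subtype.ext hbp)
    · intro h'; exact absurd (Finset.mem_univ p) h'

lemma hmat_split {m ℓ : ℕ} (y x : TreeBallY m ℓ) (c : ℂ) :
    (if (treeGraphY m ℓ).Adj y x then c else 0)
      = (if ∃ a : Fin m, x.1 = y.1 ++ [a] then c else 0)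
        + (if (y.1 ≠ [] ∧ x.1 = y.1.dropLast) then c else 0) := by
  rw [adj_iff]
  by_cases hA : ∃ a : Fin m, x.1 = y.1 ++ [a]
  · have hB : ¬(y.1 ≠ [] ∧ x.1 = y.1.dropLast) := by
      rintro ⟨hne, hdrop⟩
      obtain ⟨a, ha⟩ := hA
      have h1 := congrArg List.length ha
      have h2 := congrArg List.length hdrop
      have h3 : y.1.length ≠ 0 := by simpa using hne
      simp [List.length_dropLast] at h1 h2
      omega
    rw [if_pos (Or.inl hA), if_pos hA, if_neg hB, add_zero]
  · by_cases hB : ∃ a : Fin m, y.1 = x.1 ++ [a]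
    · rw [if_pos (Or.inr hB), if_neg hA, if_pos ((parent_iff x y).1 hB), zero_add]
    · rw [if_neg, if_neg hA, if_neg, add_zero]
      · intro h; exact hB ((parent_iff x y).2 h)
      · rintro (h | h); exacts [hA h, hB h]

/-- The candidate column vector `u x = msc * (-msc/√(d-1))^{|x|}`. -/
noncomputable def uvec (d ℓ : ℕ) (msc : ℂ) : TreeBallY (d - 1) ℓ → ℂ :=
  fun x => msc * (-(msc * (Real.sqrt ((d : ℝ) - 1) : ℂ)⁻¹)) ^ x.1.length

lemma hs2_aux (d : ℕ) (hd : 3 ≤ d) :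
    ((d - 1 : ℕ) : ℂ) * ((Real.sqrt ((d : ℝ) - 1) : ℂ)⁻¹) ^ 2 = 1 := by
  have h0 : (0:ℝ) ≤ (d : ℝ) - 1 := by
    have : (3:ℝ) ≤ (d:ℝ) := by exact_mod_cast hd
    linarith
  have hsq : (Real.sqrt ((d:ℝ) - 1)) ^ 2 = (d:ℝ) - 1 := Real.sq_sqrt h0
  have h1 : ((Real.sqrt ((d:ℝ) - 1) : ℝ) : ℂ) ^ 2 = ((d - 1 : ℕ) : ℂ) := by
    rw [← Complex.ofReal_pow, hsq]
    push_cast [Nat.cast_sub (show 1 ≤ d by omega)]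
    norm_num
  have hne : ((Real.sqrt ((d:ℝ) - 1) : ℝ) : ℂ) ^ 2 ≠ 0 := by
    rw [h1]
    exact Nat.cast_ne_zero.mpr (by omega : d - 1 ≠ 0)
  rw [← h1, inv_pow, mul_inv_cancel₀ hne]

lemma key_mulVec (d ℓ : ℕ) (hd : 3 ≤ d) (hℓ : 1 ≤ ℓ) (z msc : ℂ)
    (hmsc : msc ^ 2 + z * msc + 1 = 0) :
    (HmatY d ℓ - z • 1 - msc • IbdY d ℓ) *ᵥ uvec d ℓ msc
      = fun y => if y = rootY (d - 1) ℓ then 1 else 0 := by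
  set si : ℂ := (Real.sqrt ((d : ℝ) - 1) : ℂ)⁻¹ with hsi
  have hs2 : ((d - 1 : ℕ) : ℂ) * si ^ 2 = 1 := hs2_aux d hd
  funext y
  rw [Matrix.sub_mulVec, Matrix.sub_mulVec, Matrix.smul_mulVec,
    Matrix.smul_mulVec, Matrix.one_mulVec]
  have hIbd : (IbdY d ℓ *ᵥ uvec d ℓ msc) y
      = (if y.1.length = ℓ then 1 else 0) * uvec d ℓ msc y := by
    rw [IbdY, Matrix.mulVec_diagonal, dist_root]
  have hH : (HmatY d ℓ *ᵥ uvec d ℓ msc) y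
      = (if h : y.1.length < ℓ then
          ∑ a : Fin (d - 1), si * uvec d ℓ msc ⟨y.1 ++ [a], by simpa using h⟩ else 0)
        + (if y.1 ≠ [] then
            si * uvec d ℓ msc ⟨y.1.dropLast,
              by rw [List.length_dropLast]; exact le_trans (Nat.sub_le _ _) y.2⟩
          else 0) := by
    show ∑ x, HmatY d ℓ y x * uvec d ℓ msc x = _
    simp only [HmatY, ite_mul, zero_mul]
    rw [Finset.sum_congr rfl (fun x _ => hmat_split y x _)]
    rw [Finset.sum_add_distrib,
      sum_children y (fun x => si * uvec d ℓ msc x),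
      sum_parent y (fun x => si * uvec d ℓ msc x)]
  simp only [Pi.sub_apply, Pi.smul_apply, smul_eq_mul, hH, hIbd]
  by_cases hroot : y.1.length = 0
  · have hy : y = rootY (d - 1) ℓ := Subtype.ext (List.length_eq_zero_iff.mp hroot)
    rw [if_pos hy]
    have hlt : y.1.length < ℓ := by omega
    rw [dif_pos hlt, if_neg (by simp [List.length_eq_zero_iff.mp hroot]), if_neg (by omega : ¬ y.1.length = ℓ)]
    have hch : ∀ a : Fin (d - 1),
        uvec d ℓ msc ⟨y.1 ++ [a], by simpa using hlt⟩ = msc * (-(msc * si)) := by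
      intro a
      simp [uvec, ← hsi, List.length_eq_zero_iff.mp hroot]
    simp only [hch]
    rw [Finset.sum_const, Finset.card_univ, Fintype.card_fin, nsmul_eq_mul]
    simp only [uvec, ← hsi, hroot, pow_zero, mul_one, zero_mul, sub_zero]
    linear_combination (-(msc^2)) * hs2 - hmsc
  · have hy : ¬ y = rootY (d - 1) ℓ := by
      intro h
      apply hroot
      rw [h]
      rfl
    rw [if_neg hy]
    have hyne : y.1 ≠ [] := by
      intro h
      exact hroot (by simp [h])
    rw [if_pos hyne]
    obtain ⟨k, hk⟩ : ∃ k, y.1.length = k + 1 := ⟨y.1.length - 1, by omega⟩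
    have hdrop : (y.1.dropLast).length = k := by
      rw [List.length_dropLast, hk]; omega
    by_cases hlt : y.1.length < ℓ
    · rw [dif_pos hlt, if_neg (by omega : ¬ y.1.length = ℓ)]
      have hch : ∀ a : Fin (d - 1),
          uvec d ℓ msc ⟨y.1 ++ [a], by simpa using hlt⟩
            = msc * (-(msc * si)) ^ (k + 1 + 1) := by
        intro a
        simp [uvec, ← hsi, hk]
      simp only [hch]
      rw [Finset.sum_const, Finset.card_univ, Fintype.card_fin, nsmul_eq_mul]
      simp only [uvec, ← hsi, hdrop, hk]
      simp only [pow_succ]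
      generalize (-(msc * si)) ^ k = t
      linear_combination (si * msc ^ 3 * t) * hs2 + (si * msc * t) * hmsc
    · have hleq : y.1.length = ℓ := by
        have := y.2
        omega
      rw [dif_neg hlt, if_pos hleq]
      simp only [uvec, ← hsi, hdrop, hk]
      simp only [pow_succ]
      generalize (-(msc * si)) ^ k = t
      linear_combination (si * msc * t) * hmsc

lemma M_transpose (d ℓ : ℕ) (z msc : ℂ) :
    (HmatY d ℓ - z • 1 - msc • IbdY d ℓ)ᵀ = HmatY d ℓ - z • 1 - msc • IbdY d ℓ := by
  have hH : (HmatY d ℓ)ᵀ = HmatY d ℓ := by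
    ext x y
    simp only [Matrix.transpose_apply, HmatY]
    rw [SimpleGraph.adj_comm]
  rw [Matrix.transpose_sub, Matrix.transpose_sub, Matrix.transpose_smul,
    Matrix.transpose_smul, Matrix.transpose_one, hH, IbdY, Matrix.diagonal_transpose]

lemma det_ne_zero (d ℓ : ℕ) (z msc : ℂ) (hz : 0 < z.im) (him : 0 < msc.im) :
    (HmatY d ℓ - z • 1 - msc • IbdY d ℓ).det ≠ 0 := by
  intro hdet
  obtain ⟨v, hv0, hv⟩ := (Matrix.exists_mulVec_eq_zero_iff).mpr hdet
  set g : TreeBallY (d-1) ℓ → ℂ :=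
    fun x => if (treeGraphY (d-1) ℓ).dist (rootY (d-1) ℓ) x = ℓ then 1 else 0 with hg
  have hMv : ∀ x, (HmatY d ℓ *ᵥ v) x - z * v x - msc * (g x * v x) = 0 := by
    intro x
    have h := congrFun hv x
    rw [Matrix.sub_mulVec, Matrix.sub_mulVec, Matrix.smul_mulVec,
      Matrix.smul_mulVec, Matrix.one_mulVec] at h
    simpa [IbdY, Matrix.mulVec_diagonal, hg] using h
  have hHreal : ∀ x y, (starRingEnd ℂ) (HmatY d ℓ x y) = HmatY d ℓ x y := by
    intro x y
    rw [HmatY]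
    split
    · rw [map_inv₀, Complex.conj_ofReal]
    · simp
  have hHsymm : ∀ x y, HmatY d ℓ x y = HmatY d ℓ y x := by
    intro x y
    simp only [HmatY]
    rw [SimpleGraph.adj_comm]
  have hHS : ((starRingEnd ℂ) (∑ x, (starRingEnd ℂ) (v x) * (HmatY d ℓ *ᵥ v) x))
      = ∑ x, (starRingEnd ℂ) (v x) * (HmatY d ℓ *ᵥ v) x := by
    have hexp : (∑ x, (starRingEnd ℂ) (v x) * (HmatY d ℓ *ᵥ v) x)
        = ∑ x, ∑ y, (starRingEnd ℂ) (v x) * (HmatY d ℓ x y * v y) := by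
      refine Finset.sum_congr rfl fun x _ => ?_
      rw [show (HmatY d ℓ *ᵥ v) x = ∑ y, HmatY d ℓ x y * v y from rfl, Finset.mul_sum]
    rw [hexp, map_sum]
    simp only [map_sum, _root_.map_mul, Complex.conj_conj, hHreal]
    rw [Finset.sum_comm]
    refine Finset.sum_congr rfl fun a _ => Finset.sum_congr rfl fun b _ => ?_
    rw [hHsymm b a]
    ring
  have hsplit : ∀ x, (starRingEnd ℂ) (v x)
        * ((HmatY d ℓ *ᵥ v) x - z * v x - msc * (g x * v x))
      = (starRingEnd ℂ) (v x) * (HmatY d ℓ *ᵥ v) x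
        - (z + msc * g x) * ((Complex.normSq (v x) : ℝ) : ℂ) := by
    intro x
    rw [← Complex.mul_conj (v x)]
    ring
  have hzero : (∑ x, (starRingEnd ℂ) (v x)
      * ((HmatY d ℓ *ᵥ v) x - z * v x - msc * (g x * v x))) = 0 :=
    Finset.sum_eq_zero fun x _ => by rw [hMv x, mul_zero]
  have hEq : (∑ x, (z + msc * g x) * ((Complex.normSq (v x) : ℝ) : ℂ))
      = ∑ x, (starRingEnd ℂ) (v x) * (HmatY d ℓ *ᵥ v) x := by
    have h := hzero
    rw [Finset.sum_congr rfl (fun x _ => hsplit x), Finset.sum_sub_distrib] at h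
    exact (sub_eq_zero.mp h).symm
  have hIm : (∑ x, (z + msc * g x) * ((Complex.normSq (v x) : ℝ) : ℂ)).im = 0 := by
    rw [hEq]
    exact Complex.conj_eq_iff_im.mp hHS
  rw [Complex.im_sum] at hIm
  have hterm : ∀ x, ((z + msc * g x) * ((Complex.normSq (v x) : ℝ) : ℂ)).im
      = (z + msc * g x).im * Complex.normSq (v x) := by
    intro x
    simp [Complex.mul_im]
  have hcpos : ∀ x, 0 < (z + msc * g x).im := by
    intro x
    by_cases h : (treeGraphY (d-1) ℓ).dist (rootY (d-1) ℓ) x = ℓ <;>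
      · simp [hg, h, Complex.add_im, Complex.mul_im]
        positivity
  have hnn : ∀ x ∈ Finset.univ,
      (0:ℝ) ≤ ((z + msc * g x) * ((Complex.normSq (v x) : ℝ) : ℂ)).im := by
    intro x _
    rw [hterm]
    exact mul_nonneg (hcpos x).le (Complex.normSq_nonneg _)
  have hall := (Finset.sum_eq_zero_iff_of_nonneg hnn).mp hIm
  apply hv0
  funext x
  have hx := hall x (Finset.mem_univ x)
  rw [hterm] at hx
  have hns : Complex.normSq (v x) = 0 := by
    rcases mul_eq_zero.mp hx with h | h
    · exact absurd h (ne_of_gt (hcpos x))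
    · exact h
  simpa using Complex.normSq_eq_zero.mp hns

/-- Equivalence between the leaves of the ball and words of length exactly `ℓ`. -/
def leafEquiv (m ℓ : ℕ) :
    {x : TreeBallY m ℓ // x.1.length = ℓ} ≃ List.Vector (Fin m) ℓ where
  toFun x := ⟨x.1.1, x.2⟩
  invFun v := ⟨⟨v.1, le_of_eq v.2⟩, v.2⟩
  left_inv x := Subtype.ext (Subtype.ext rfl)
  right_inv v := Subtype.ext rfl

lemma card_leaves (m ℓ : ℕ) :
    (Finset.univ.filter (fun x : TreeBallY m ℓ => x.1.length = ℓ)).card = m ^ ℓ := by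
  classical
  rw [← Fintype.card_subtype]
  rw [Fintype.card_congr (leafEquiv m ℓ), card_vector, Fintype.card_fin]

end PIbdPAux

/-- For `d ≥ 3`, `ℓ ≥ 1`, `z ∈ ℂ` with `Im z > 0`, `m_sc(z)` the unique root of
`m² + z m + 1 = 0` with positive imaginary part, and `P` the inverse of
`H_{𝒴_ℓ} - z·I - m_sc(z)·𝕀∂`, one has `(P·𝕀∂·P)_{oo} = m_sc(z)^{2ℓ+2}`. -/
theorem P_Ibd_P_oo (d ℓ : ℕ) (hd : 3 ≤ d) (hℓ : 1 ≤ ℓ)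
    (z msc : ℂ) (hz : 0 < z.im)
    (hmsc : msc ^ 2 + z * msc + 1 = 0) (him : 0 < msc.im)
    (P : Matrix (TreeBallY (d - 1) ℓ) (TreeBallY (d - 1) ℓ) ℂ)
    (hP : P = (HmatY d ℓ - z • 1 - msc • IbdY d ℓ)⁻¹) :
    (P * IbdY d ℓ * P) (rootY (d - 1) ℓ) (rootY (d - 1) ℓ) = msc ^ (2 * ℓ + 2) := by
  classical
  set si : ℂ := (Real.sqrt ((d : ℝ) - 1) : ℂ)⁻¹ with hsi
  have hs2 : ((d - 1 : ℕ) : ℂ) * si ^ 2 = 1 := PIbdPAux.hs2_aux d hd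
  set M := HmatY d ℓ - z • 1 - msc • IbdY d ℓ with hM
  have hdet : M.det ≠ 0 := PIbdPAux.det_ne_zero d ℓ z msc hz him
  have hdetU : IsUnit M.det := isUnit_iff_ne_zero.mpr hdet
  have hPM : P * M = 1 := by rw [hP]; exact Matrix.nonsing_inv_mul M hdetU
  have hkey : M.mulVec (PIbdPAux.uvec d ℓ msc)
      = fun y => if y = rootY (d - 1) ℓ then 1 else 0 :=
    PIbdPAux.key_mulVec d ℓ hd hℓ z msc hmsc
  have hcol : ∀ x, P x (rootY (d - 1) ℓ) = PIbdPAux.uvec d ℓ msc x := by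
    intro x
    have h1 : P.mulVec (M.mulVec (PIbdPAux.uvec d ℓ msc)) = PIbdPAux.uvec d ℓ msc := by
      rw [Matrix.mulVec_mulVec, hPM, Matrix.one_mulVec]
    rw [hkey] at h1
    have h2 := congrFun h1 x
    simpa [Matrix.mulVec, dotProduct, mul_ite, mul_one, mul_zero,
      Finset.sum_ite_eq'] using h2
  have hPT : P.transpose = P := by
    rw [hP, Matrix.transpose_nonsing_inv, PIbdPAux.M_transpose]
  have hrow : ∀ x, P (rootY (d - 1) ℓ) x = PIbdPAux.uvec d ℓ msc x := by
    intro x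
    have : P.transpose x (rootY (d - 1) ℓ) = P x (rootY (d - 1) ℓ) := by rw [hPT]
    rw [Matrix.transpose_apply] at this
    rw [this, hcol x]
  have hstep1 : (P * IbdY d ℓ * P) (rootY (d - 1) ℓ) (rootY (d - 1) ℓ)
      = ∑ x, (if x.1.length = ℓ then
          PIbdPAux.uvec d ℓ msc x * PIbdPAux.uvec d ℓ msc x else 0) := by
    rw [Matrix.mul_apply]
    refine Finset.sum_congr rfl fun x _ => ?_
    rw [show (P * IbdY d ℓ) (rootY (d - 1) ℓ) x
        = P (rootY (d - 1) ℓ) x * (if x.1.length = ℓ then 1 else 0) by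
      rw [IbdY, Matrix.mul_diagonal, PIbdPAux.dist_root]]
    rw [hrow x, hcol x]
    by_cases h : x.1.length = ℓ <;> simp [h]
  rw [hstep1, ← Finset.sum_filter]
  have hconst : ∀ x ∈ Finset.univ.filter (fun x : TreeBallY (d-1) ℓ => x.1.length = ℓ),
      PIbdPAux.uvec d ℓ msc x * PIbdPAux.uvec d ℓ msc x
        = (msc * (-(msc * si)) ^ ℓ) * (msc * (-(msc * si)) ^ ℓ) := by
    intro x hx
    have hxl : x.1.length = ℓ := (Finset.mem_filter.mp hx).2
    rw [PIbdPAux.uvec, ← hsi, hxl]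
  rw [Finset.sum_congr rfl hconst, Finset.sum_const, PIbdPAux.card_leaves,
    nsmul_eq_mul]
  have hpow : ((d - 1 : ℕ) ^ ℓ : ℕ) = (((d:ℕ) - 1 : ℕ) : ℂ) ^ ℓ := by push_cast; ring
  rw [hpow]
  have hr2 : (-(msc * si)) ^ ℓ * (-(msc * si)) ^ ℓ = (msc ^ 2 * si ^ 2) ^ ℓ := by
    rw [← mul_pow]
    congr 1
    ring
  have hD : ((d - 1 : ℕ) : ℂ) ^ ℓ * (msc ^ 2 * si ^ 2) ^ ℓ = (msc ^ 2) ^ ℓ := by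
    rw [← mul_pow]
    congr 1
    linear_combination msc ^ 2 * hs2
  calc ((d - 1 : ℕ) : ℂ) ^ ℓ * ((msc * (-(msc * si)) ^ ℓ) * (msc * (-(msc * si)) ^ ℓ))
      = msc ^ 2 * (((d - 1 : ℕ) : ℂ) ^ ℓ * ((-(msc * si)) ^ ℓ * (-(msc * si)) ^ ℓ)) := by
        ring
    _ = msc ^ 2 * ((msc ^ 2) ^ ℓ) := by rw [hr2, hD]
    _ = msc ^ (2 * ℓ + 2) := by
        rw [← pow_mul, pow_add]
        ring
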